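/- (The VQA objective lies in H) Let N and m be positive integers, let M be an N×N complex Hermitian matrix, let C_1, …, C_{m+1} be N×N unitary complex matrices, let G_1, …, G_m be N×N Hermitian complex matrices with G_j·G_j = 1 for all j, and let v ∈ ℂ^N. For θ ∈ ℝ^m define ψ(θ) = C_{m+1}·exp(−(i·θ_m/2)·G_m)·C_m · ⋯ · exp(−(i·θ_1/2)·G_1)·C_1 · v and f(θ) = star(ψ(θ)) ⬝ᵥ (M.mulVec ψ(θ)). Then there exist coefficients c : Ω → ℂ with c(−ω) = conj(c(ω)) for all ω ∈ Ω = {−1,0,1}^m such that for every θ ∈ ℝ^m, f(θ) = Σ_{ω∈Ω} c(ω)·exp(i·ωᵀθ); in particular f takes real values and lies in H. -/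

import Mathlib

open MeasureTheory Real Finset

noncomputable section

/-- `Ω = {-1,0,1}^m` as a finite set of integer vectors. -/
def Omega (m : ℕ) : Finset (Fin m → ℤ) := Finset.Icc (-1) 1

/-- `ωᵀz = ∑ j, ω j * z j`. -/
def dotIZ {m : ℕ} (ω : Fin m → ℤ) (z : Fin m → ℝ) : ℝ := ∑ j, (ω j : ℝ) * z j

/-- A function `g : ℝ^m → ℝ` lies in `H` if it has a Fourier representation with
frequencies in `Ω = {-1,0,1}^m` and coefficients satisfying `c (-ω) = conj (c ω)`. -/
def IsInH (m : ℕ) (g : (Fin m → ℝ) → ℝ) : Prop :=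
  ∃ c : (Fin m → ℤ) → ℂ,
    (∀ ω ∈ Omega m, c (-ω) = starRingEnd ℂ (c ω)) ∧
    ∀ z : Fin m → ℝ, (g z : ℂ) =
      ∑ ω ∈ Omega m, c ω * Complex.exp (Complex.I * ((dotIZ ω z : ℝ) : ℂ))

/-- The kernel `K̃(x,z) = ∏ j, (1 + 2 cos (x j - z j)) / 3`. -/
def Ktilde (m : ℕ) (x z : Fin m → ℝ) : ℝ :=
  ∏ j, (1 + 2 * Real.cos (x j - z j)) / 3

/-- The grid `Q = {-2π/3, 0, 2π/3}^m` as a finite set of real vectors. -/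
def Qgrid (m : ℕ) : Finset (Fin m → ℝ) :=
  (Omega m).image (fun ω j => 2 * π / 3 * (ω j : ℝ))

/-- The set of points of `Q` having at most `L` non-zero entries. -/
def QgridL (m L : ℕ) : Finset (Fin m → ℝ) :=
  (Qgrid m).filter (fun q => (Finset.univ.filter (fun j => q j ≠ 0)).card ≤ L)

/-- The cube `[-π, π]^m`. -/
def cube (m : ℕ) : Set (Fin m → ℝ) := Set.pi Set.univ fun _ : Fin m => Set.Icc (-π) π

open Matrix in
/-- The state `ψ(θ) = C_{m+1} · R_m(θ_m) · C_m · ⋯ · R_1(θ_1) · C_1 · v`, where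
`R_j(x) = exp(-(i x / 2) G_j)`. (Indices are 0-based: `C j.castSucc` is applied
before the rotation generated by `G j`, and `C (Fin.last m)` is applied last.) -/
def psiVec (N m : ℕ) (C : Fin (m + 1) → Matrix (Fin N) (Fin N) ℂ)
    (G : Fin m → Matrix (Fin N) (Fin N) ℂ) (v : Fin N → ℂ) (θ : Fin m → ℝ) :
    Fin N → ℂ :=
  (C (Fin.last m) *
      ((List.ofFn fun j : Fin m =>
          NormedSpace.exp ((-(Complex.I * ((θ j / 2 : ℝ) : ℂ))) • G j) *
            C j.castSucc).reverse).prod).mulVec v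

-- auxiliary machinery


namespace Stmt19Aux

open Matrix

lemma exp_mul_eigen {n : ℕ} (A P : Matrix (Fin n) (Fin n) ℂ) (z : ℂ) (h : A * P = z • P) :
    NormedSpace.exp A * P = Complex.exp z • P := by
  letI : SeminormedRing (Matrix (Fin n) (Fin n) ℂ) := Matrix.linftyOpSemiNormedRing
  letI : NormedRing (Matrix (Fin n) (Fin n) ℂ) := Matrix.linftyOpNormedRing
  letI : NormedAlgebra ℂ (Matrix (Fin n) (Fin n) ℂ) := Matrix.linftyOpNormedAlgebra
  have hpow : ∀ k : ℕ, A ^ k * P = z ^ k • P := by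
    intro k
    induction k with
    | zero => simp
    | succ k ih =>
      rw [pow_succ, pow_succ, mul_assoc, h, Matrix.mul_smul, ih, smul_smul, mul_comm]
  rw [NormedSpace.exp_eq_tsum (𝕂 := ℂ)]
  beta_reduce
  erw [← (NormedSpace.expSeries_summable' (𝕂 := ℂ) A).tsum_mul_right]
  have h2 : ∀ k : ℕ, (((k.factorial : ℕ) : ℂ)⁻¹ • A ^ k) * P
      = (((k.factorial : ℕ) : ℂ)⁻¹ * z ^ k) • P := by
    intro k
    rw [Matrix.smul_mul, hpow, smul_smul]
  simp_rw [h2]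
  have hs : Summable fun k : ℕ => ((k.factorial : ℕ) : ℂ)⁻¹ * z ^ k := by
    simpa [smul_eq_mul] using NormedSpace.expSeries_summable' (𝕂 := ℂ) (x := z)
  rw [Summable.tsum_smul_const hs]
  congr 1
  rw [Complex.exp_eq_exp_ℂ, NormedSpace.exp_eq_tsum (𝕂 := ℂ)]
  simp [smul_eq_mul]

lemma prod_ofFn_reverse_succ {R : Type*} [Monoid R] {n : ℕ} (f : Fin (n + 1) → R) :
    ((List.ofFn f).reverse).prod
      = ((List.ofFn fun j : Fin n => f j.succ).reverse).prod * f 0 := by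
  rw [List.ofFn_succ, List.reverse_cons, List.prod_append, List.prod_singleton]

lemma prod_ofFn_expand {R : Type*} [Ring R] {n : ℕ} (F : Fin n → Bool → R) :
    ((List.ofFn fun j => F j false + F j true).reverse).prod
      = ∑ s : Fin n → Bool, ((List.ofFn fun j => F j (s j)).reverse).prod := by
  induction n with
  | zero => simp
  | succ n ih =>
    rw [prod_ofFn_reverse_succ, ih fun j b => F j.succ b, Finset.sum_mul]
    rw [← (Fin.consEquiv fun _ : Fin (n + 1) => Bool).sum_comp
        (fun s => ((List.ofFn fun j => F j (s j)).reverse).prod), Fintype.sum_prod_type]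
    rw [Fintype.sum_bool]
    simp only [Fin.consEquiv, Equiv.coe_fn_mk]
    rw [← Finset.sum_add_distrib]
    refine Finset.sum_congr rfl fun s _ => ?_
    simp only [prod_ofFn_reverse_succ, Fin.cons_zero, Fin.cons_succ]
    rw [mul_add, add_comm]

lemma prod_ofFn_smul {n N : ℕ} (c : Fin n → ℂ) (A : Fin n → Matrix (Fin N) (Fin N) ℂ) :
    ((List.ofFn fun j => c j • A j).reverse).prod
      = (∏ j, c j) • ((List.ofFn A).reverse).prod := by
  induction n with
  | zero => simp
  | succ n ih =>
    rw [prod_ofFn_reverse_succ, prod_ofFn_reverse_succ A,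
      ih (fun j => c j.succ) (fun j => A j.succ), Fin.prod_univ_succ]
    rw [smul_mul_assoc, Matrix.mul_smul, smul_smul, mul_comm]

lemma rot_decomp {N : ℕ} (G : Matrix (Fin N) (Fin N) ℂ) (hG2 : G * G = 1) (x : ℝ) :
    NormedSpace.exp ((-(Complex.I * ((x / 2 : ℝ) : ℂ))) • G)
      = Complex.exp (-Complex.I * (x : ℂ) / 2) • ((2 : ℂ)⁻¹ • (1 + G))
        + Complex.exp (Complex.I * (x : ℂ) / 2) • ((2 : ℂ)⁻¹ • (1 - G)) := by
  set z : ℂ := -(Complex.I * ((x / 2 : ℝ) : ℂ)) with hz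
  set P : Matrix (Fin N) (Fin N) ℂ := (2 : ℂ)⁻¹ • (1 + G) with hP
  set Q : Matrix (Fin N) (Fin N) ℂ := (2 : ℂ)⁻¹ • (1 - G) with hQ
  have hPQ : P + Q = 1 := by
    rw [hP, hQ, ← smul_add]
    have h1 : (1 + G) + (1 - G) = (2 : ℂ) • (1 : Matrix (Fin N) (Fin N) ℂ) := by
      rw [two_smul]; abel
    rw [h1, smul_smul, inv_mul_cancel₀ two_ne_zero, one_smul]
  have hGP : G * P = P := by
    rw [hP, Matrix.mul_smul, mul_add, mul_one, hG2, add_comm]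
  have hGQ : G * Q = -Q := by
    rw [hQ, Matrix.mul_smul, mul_sub, mul_one, hG2, show G - 1 = -(1 - G) by abel, smul_neg]
  have h1 : (z • G) * P = z • P := by
    rw [Matrix.smul_mul, hGP]
  have h2 : (z • G) * Q = (-z) • Q := by
    rw [Matrix.smul_mul, hGQ, smul_neg]
    exact (neg_smul z Q).symm
  have e1 : NormedSpace.exp (z • G) * P = Complex.exp z • P := exp_mul_eigen _ _ _ h1
  have e2 : NormedSpace.exp (z • G) * Q = Complex.exp (-z) • Q := exp_mul_eigen _ _ _ h2
  have key : NormedSpace.exp (z • G) = Complex.exp z • P + Complex.exp (-z) • Q := by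
    rw [← mul_one (NormedSpace.exp (z • G)), ← hPQ, mul_add, e1, e2]
  rw [key]
  have hz1 : z = -Complex.I * (x : ℂ) / 2 := by rw [hz]; push_cast; ring
  rw [hz1, show -(-Complex.I * (x : ℂ) / 2) = Complex.I * (x : ℂ) / 2 by ring]

lemma sum_mulVec' {N : ℕ} {ι : Type*} (s : Finset ι) (f : ι → Matrix (Fin N) (Fin N) ℂ)
    (v : Fin N → ℂ) : (∑ i ∈ s, f i).mulVec v = ∑ i ∈ s, (f i).mulVec v := by
  ext k
  simp only [Matrix.mulVec, dotProduct, Matrix.sum_apply, Finset.sum_mul,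
    Finset.sum_apply]
  rw [Finset.sum_comm]

lemma conj_dot {N : ℕ} (M : Matrix (Fin N) (Fin N) ℂ) (hM : Mᴴ = M) (x y : Fin N → ℂ) :
    starRingEnd ℂ (star x ⬝ᵥ M.mulVec y) = star y ⬝ᵥ M.mulVec x := by
  have hMc : ∀ k l, starRingEnd ℂ (M k l) = M l k := by
    intro k l
    simpa [Matrix.conjTranspose_apply] using congrFun (congrFun hM l) k
  simp only [dotProduct, Matrix.mulVec, Pi.star_apply, map_sum, _root_.map_mul,
    Complex.star_def, Complex.conj_conj, hMc, Finset.mul_sum]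
  rw [Finset.sum_comm]
  exact Finset.sum_congr rfl fun l _ => Finset.sum_congr rfl fun k _ => by ring

lemma sum_dotProduct' {N : ℕ} {ι : Type*} (s : Finset ι) (f : ι → (Fin N → ℂ))
    (w : Fin N → ℂ) : (∑ i ∈ s, f i) ⬝ᵥ w = ∑ i ∈ s, f i ⬝ᵥ w := by
  simp only [dotProduct, Finset.sum_apply, Finset.sum_mul]
  rw [Finset.sum_comm]

lemma dotProduct_sum' {N : ℕ} {ι : Type*} (s : Finset ι) (w : Fin N → ℂ)
    (f : ι → (Fin N → ℂ)) : w ⬝ᵥ (∑ i ∈ s, f i) = ∑ i ∈ s, w ⬝ᵥ f i := by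
  simp only [dotProduct, Finset.sum_apply, Finset.mul_sum]
  rw [Finset.sum_comm]

-- the building blocks

def phiAux (b : Bool) (x : ℝ) : ℂ :=
  Complex.exp ((cond b Complex.I (-Complex.I)) * (x : ℂ) / 2)

def BAux {N m : ℕ} (C : Fin (m + 1) → Matrix (Fin N) (Fin N) ℂ)
    (G : Fin m → Matrix (Fin N) (Fin N) ℂ) (j : Fin m) (b : Bool) :
    Matrix (Fin N) (Fin N) ℂ :=
  (cond b ((2 : ℂ)⁻¹ • (1 - G j)) ((2 : ℂ)⁻¹ • (1 + G j))) * C j.castSucc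

def uAux {N m : ℕ} (C : Fin (m + 1) → Matrix (Fin N) (Fin N) ℂ)
    (G : Fin m → Matrix (Fin N) (Fin N) ℂ) (v : Fin N → ℂ) (s : Fin m → Bool) :
    Fin N → ℂ :=
  (C (Fin.last m) * ((List.ofFn fun j => BAux C G j (s j)).reverse).prod).mulVec v

def aAux {m : ℕ} (s : Fin m → Bool) (θ : Fin m → ℝ) : ℂ := ∏ j, phiAux (s j) (θ j)

def wAux {m : ℕ} (s t : Fin m → Bool) : Fin m → ℤ :=
  fun j => (if t j then 1 else 0) - (if s j then 1 else 0)

def KAux {N m : ℕ} (M : Matrix (Fin N) (Fin N) ℂ) (C : Fin (m + 1) → Matrix (Fin N) (Fin N) ℂ)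
    (G : Fin m → Matrix (Fin N) (Fin N) ℂ) (v : Fin N → ℂ) (s t : Fin m → Bool) : ℂ :=
  star (uAux C G v s) ⬝ᵥ M.mulVec (uAux C G v t)

def cAux {N m : ℕ} (M : Matrix (Fin N) (Fin N) ℂ) (C : Fin (m + 1) → Matrix (Fin N) (Fin N) ℂ)
    (G : Fin m → Matrix (Fin N) (Fin N) ℂ) (v : Fin N → ℂ) (ω : Fin m → ℤ) : ℂ :=
  ∑ p ∈ Finset.univ.filter
      (fun p : (Fin m → Bool) × (Fin m → Bool) => wAux p.1 p.2 = ω),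
    KAux M C G v p.1 p.2

variable {N m : ℕ} (M : Matrix (Fin N) (Fin N) ℂ) (C : Fin (m + 1) → Matrix (Fin N) (Fin N) ℂ)
  (G : Fin m → Matrix (Fin N) (Fin N) ℂ) (v : Fin N → ℂ)

lemma psi_expand (hG2 : ∀ j, G j * G j = 1) (θ : Fin m → ℝ) :
    psiVec N m C G v θ = ∑ s : Fin m → Bool, aAux s θ • uAux C G v s := by
  rw [psiVec]
  have hlist : (fun j : Fin m =>
      NormedSpace.exp ((-(Complex.I * ((θ j / 2 : ℝ) : ℂ))) • G j) * C j.castSucc)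
      = fun j => (phiAux false (θ j) • BAux C G j false)
          + (phiAux true (θ j) • BAux C G j true) := by
    funext j
    rw [rot_decomp (G j) (hG2 j) (θ j), add_mul]
    simp only [phiAux, BAux, cond_true, cond_false, smul_mul_assoc]
  rw [hlist, prod_ofFn_expand (fun j b => phiAux b (θ j) • BAux C G j b), Finset.mul_sum,
    sum_mulVec']
  refine Finset.sum_congr rfl fun s _ => ?_
  rw [prod_ofFn_smul (fun j => phiAux (s j) (θ j)) (fun j => BAux C G j (s j)),
    Matrix.mul_smul, Matrix.smul_mulVec]
  rfl

lemma phi_mul (b b' : Bool) (x : ℝ) :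
    starRingEnd ℂ (phiAux b x) * phiAux b' x
      = Complex.exp ((((if b' then 1 else 0) - (if b then 1 else 0) : ℤ) : ℂ)
          * Complex.I * (x : ℂ)) := by
  cases b <;> cases b' <;>
    · simp only [phiAux]
      rw [← Complex.exp_conj, ← Complex.exp_add]
      congr 1
      simp only [cond_true, cond_false, _root_.map_mul, map_div₀, map_neg, Complex.conj_I,
        Complex.conj_ofReal, map_ofNat]
      push_cast
      ring

lemma a_mul (s t : Fin m → Bool) (θ : Fin m → ℝ) :
    starRingEnd ℂ (aAux s θ) * aAux t θ
      = Complex.exp (Complex.I * ((dotIZ (wAux s t) θ : ℝ) : ℂ)) := by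
  rw [aAux, aAux, map_prod, ← Finset.prod_mul_distrib]
  simp_rw [phi_mul]
  rw [← Complex.exp_sum]
  congr 1
  rw [dotIZ]
  push_cast
  rw [Finset.mul_sum]
  refine Finset.sum_congr rfl fun j _ => ?_
  rw [show wAux s t j = ((if t j then 1 else 0) - (if s j then 1 else 0) : ℤ) from rfl]
  push_cast
  ring

lemma w_mem (s t : Fin m → Bool) : wAux s t ∈ Omega m := by
  rw [Omega, Finset.mem_Icc]
  constructor <;> (rw [Pi.le_def]; intro j) <;>
    simp only [wAux, Pi.neg_apply, Pi.one_apply] <;> split_ifs <;> norm_num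

lemma repr_lemma (hG2 : ∀ j, G j * G j = 1) (θ : Fin m → ℝ) :
    (star (psiVec N m C G v θ)) ⬝ᵥ (M.mulVec (psiVec N m C G v θ))
      = ∑ ω ∈ Omega m, cAux M C G v ω * Complex.exp (Complex.I * ((dotIZ ω θ : ℝ) : ℂ)) := by
  have expand : (star (psiVec N m C G v θ)) ⬝ᵥ (M.mulVec (psiVec N m C G v θ))
      = ∑ s : Fin m → Bool, ∑ t : Fin m → Bool,
          starRingEnd ℂ (aAux s θ)
            * (aAux t θ * (star (uAux C G v s) ⬝ᵥ M.mulVec (uAux C G v t))) := by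
    rw [psi_expand C G v hG2 θ]
    rw [show M.mulVec (∑ t : Fin m → Bool, aAux t θ • uAux C G v t)
        = ∑ t : Fin m → Bool, aAux t θ • M.mulVec (uAux C G v t) from by
      rw [← Matrix.mulVecLin_apply, map_sum]
      simp [_root_.map_smul, Matrix.mulVecLin_apply]]
    rw [star_sum, sum_dotProduct']
    simp only [star_smul, Complex.star_def, smul_dotProduct, dotProduct_sum',
      dotProduct_smul, smul_eq_mul, Finset.mul_sum]
  rw [expand]
  have step : ∀ s t : Fin m → Bool,
      starRingEnd ℂ (aAux s θ) * (aAux t θ * (star (uAux C G v s) ⬝ᵥ M.mulVec (uAux C G v t)))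
        = KAux M C G v s t * Complex.exp (Complex.I * ((dotIZ (wAux s t) θ : ℝ) : ℂ)) := by
    intro s t
    rw [← a_mul s t θ, KAux]
    ring
  calc
    ∑ s : Fin m → Bool, ∑ t : Fin m → Bool,
        starRingEnd ℂ (aAux s θ) *
          (aAux t θ * (star (uAux C G v s) ⬝ᵥ M.mulVec (uAux C G v t)))
      = ∑ p : (Fin m → Bool) × (Fin m → Bool),
          KAux M C G v p.1 p.2
            * Complex.exp (Complex.I * ((dotIZ (wAux p.1 p.2) θ : ℝ) : ℂ)) := by
        rw [Fintype.sum_prod_type]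
        exact Finset.sum_congr rfl fun s _ => Finset.sum_congr rfl fun t _ => step s t
    _ = ∑ ω ∈ Omega m, ∑ p ∈ Finset.univ.filter
          (fun p : (Fin m → Bool) × (Fin m → Bool) => wAux p.1 p.2 = ω),
          KAux M C G v p.1 p.2
            * Complex.exp (Complex.I * ((dotIZ (wAux p.1 p.2) θ : ℝ) : ℂ)) := by
        rw [Finset.sum_fiberwise_of_maps_to (fun p _ => w_mem p.1 p.2)]
    _ = ∑ ω ∈ Omega m, cAux M C G v ω * Complex.exp (Complex.I * ((dotIZ ω θ : ℝ) : ℂ)) := by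
        refine Finset.sum_congr rfl fun ω _ => ?_
        rw [cAux, Finset.sum_mul]
        refine Finset.sum_congr rfl fun p hp => ?_
        rw [(Finset.mem_filter.mp hp).2]

lemma w_swap (s t : Fin m → Bool) : wAux t s = -(wAux s t) := by
  funext j
  simp only [wAux, Pi.neg_apply]
  ring

lemma c_symm (hM : Mᴴ = M) (ω : Fin m → ℤ) :
    cAux M C G v (-ω) = starRingEnd ℂ (cAux M C G v ω) := by
  rw [cAux, cAux, map_sum]
  refine Finset.sum_nbij' (fun p => (p.2, p.1)) (fun p => (p.2, p.1)) ?_ ?_ ?_ ?_ ?_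
  · intro p hp
    rw [Finset.mem_filter] at hp ⊢
    refine ⟨Finset.mem_univ _, ?_⟩
    rw [w_swap, hp.2, neg_neg]
  · intro p hp
    rw [Finset.mem_filter] at hp ⊢
    refine ⟨Finset.mem_univ _, ?_⟩
    rw [w_swap, hp.2]
  · intro p _; rfl
  · intro p _; rfl
  · intro p _
    rw [KAux, KAux]
    exact (conj_dot M hM _ _).symm

lemma dotIZ_neg (ω : Fin m → ℤ) (θ : Fin m → ℝ) : dotIZ (-ω) θ = -dotIZ ω θ := by
  rw [dotIZ, dotIZ, ← Finset.sum_neg_distrib]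
  refine Finset.sum_congr rfl fun j _ => ?_
  simp only [Pi.neg_apply]
  push_cast
  ring

lemma real_lemma (hM : Mᴴ = M) (θ : Fin m → ℝ) :
    starRingEnd ℂ (∑ ω ∈ Omega m, cAux M C G v ω
        * Complex.exp (Complex.I * ((dotIZ ω θ : ℝ) : ℂ)))
      = ∑ ω ∈ Omega m, cAux M C G v ω * Complex.exp (Complex.I * ((dotIZ ω θ : ℝ) : ℂ)) := by
  rw [map_sum]
  have hmem : ∀ ω ∈ Omega m, -ω ∈ Omega m := by
    intro ω hω
    rw [Omega, Finset.mem_Icc] at hω ⊢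
    exact ⟨by simpa using neg_le_neg hω.2, by simpa using neg_le_neg hω.1⟩
  refine Finset.sum_nbij' (fun ω => -ω) (fun ω => -ω) (fun ω hω => hmem ω hω)
    (fun ω hω => hmem ω hω) (fun ω _ => neg_neg ω) (fun ω _ => neg_neg ω) ?_
  intro ω hω
  rw [_root_.map_mul, ← c_symm M C G v hM ω, ← Complex.exp_conj]
  congr 1
  rw [dotIZ_neg]
  simp only [_root_.map_mul, Complex.conj_I, Complex.conj_ofReal]
  push_cast
  ring

end Stmt19Aux

open Matrix in
theorem stmt_19 (N m : ℕ) (hN : 0 < N) (hm : 0 < m)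
    (M : Matrix (Fin N) (Fin N) ℂ) (hM : Mᴴ = M)
    (C : Fin (m + 1) → Matrix (Fin N) (Fin N) ℂ) (hC : ∀ j, (C j)ᴴ * C j = 1)
    (G : Fin m → Matrix (Fin N) (Fin N) ℂ) (hG : ∀ j, (G j)ᴴ = G j)
    (hG2 : ∀ j, G j * G j = 1) (v : Fin N → ℂ) :
    (∃ c : (Fin m → ℤ) → ℂ,
        (∀ ω ∈ Omega m, c (-ω) = starRingEnd ℂ (c ω)) ∧
        ∀ θ : Fin m → ℝ,
          (star (psiVec N m C G v θ)) ⬝ᵥ (M.mulVec (psiVec N m C G v θ)) =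
            ∑ ω ∈ Omega m, c ω * Complex.exp (Complex.I * ((dotIZ ω θ : ℝ) : ℂ))) ∧
    (∀ θ : Fin m → ℝ,
        ((((star (psiVec N m C G v θ)) ⬝ᵥ (M.mulVec (psiVec N m C G v θ))).re : ℝ) : ℂ) =
          (star (psiVec N m C G v θ)) ⬝ᵥ (M.mulVec (psiVec N m C G v θ))) ∧
    IsInH m (fun θ => ((star (psiVec N m C G v θ)) ⬝ᵥ (M.mulVec (psiVec N m C G v θ))).re) := by
  classical
  have hrepr := Stmt19Aux.repr_lemma M C G v hG2
  have hsym : ∀ ω ∈ Omega m, Stmt19Aux.cAux M C G v (-ω)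
      = starRingEnd ℂ (Stmt19Aux.cAux M C G v ω) := fun ω _ => Stmt19Aux.c_symm M C G v hM ω
  have hconj : ∀ θ : Fin m → ℝ,
      starRingEnd ℂ ((star (psiVec N m C G v θ)) ⬝ᵥ (M.mulVec (psiVec N m C G v θ)))
        = (star (psiVec N m C G v θ)) ⬝ᵥ (M.mulVec (psiVec N m C G v θ)) := by
    intro θ
    rw [hrepr θ]
    exact Stmt19Aux.real_lemma M C G v hM θ
  have hre : ∀ θ : Fin m → ℝ,
      ((((star (psiVec N m C G v θ)) ⬝ᵥ (M.mulVec (psiVec N m C G v θ))).re : ℝ) : ℂ) =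
        (star (psiVec N m C G v θ)) ⬝ᵥ (M.mulVec (psiVec N m C G v θ)) :=
    fun θ => Complex.conj_eq_iff_re.mp (hconj θ)
  refine ⟨⟨Stmt19Aux.cAux M C G v, hsym, hrepr⟩, hre,
    ⟨Stmt19Aux.cAux M C G v, hsym, fun z => ?_⟩⟩
  rw [hre z, hrepr z]
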